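/- arXiv:1609.06617 — 2 statements merged into one kernel-verified Lean document; each statement's English description precedes it below -/
import Mathlib

section
/- Let 0 < ε < M' and m ≥ 1 be an integer, and set c_k = ε + k(M'−ε)/m for k = 0,…,m. Let λ : [ε,M'] → ℝ be differentiable with |λ'(t)| ≤ L on [ε,M'], and let g : [ε,M'] → ℝ be nondecreasing. Then sup_{t ∈ [ε,M']} (λ(t) − g(t))^2 ≤ 4 max_{0 ≤ k ≤ m} (λ(c_k) − g(c_k))^2 + 6 L^2 (M'−ε)^2 / m^2. -/
set_option maxHeartbeats 800000


theorem grid_sup_bound (ε M' L : ℝ) (hε : 0 < ε) (hεM : ε < M')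
    (m : ℕ) (hm : 1 ≤ m) (lam lam' g : ℝ → ℝ)
    (hderiv : ∀ t ∈ Set.Icc ε M', HasDerivWithinAt lam (lam' t) (Set.Icc ε M') t)
    (hL : ∀ t ∈ Set.Icc ε M', |lam' t| ≤ L)
    (hg : MonotoneOn g (Set.Icc ε M')) :
    ∀ t ∈ Set.Icc ε M',
      (lam t - g t) ^ 2 ≤
        4 * (⨆ k : Fin (m + 1),
              (lam (ε + (k : ℕ) * (M' - ε) / m) - g (ε + (k : ℕ) * (M' - ε) / m)) ^ 2)
          + 6 * L ^ 2 * (M' - ε) ^ 2 / (m : ℝ) ^ 2 := by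
  intro t ht
  have hm0 : (0:ℝ) < m := by exact_mod_cast Nat.lt_of_lt_of_le Nat.zero_lt_one hm
  set h : ℝ := (M' - ε) / m with hh
  have hh0 : 0 < h := div_pos (by linarith) hm0
  have hL0 : 0 ≤ L := le_trans (abs_nonneg _) (hL ε ⟨le_refl _, le_of_lt hεM⟩)
  -- Lipschitz bound
  have hlip : ∀ x ∈ Set.Icc ε M', ∀ y ∈ Set.Icc ε M',
      |lam x - lam y| ≤ L * |x - y| := by
    intro x hx y hy
    have := Convex.norm_image_sub_le_of_norm_hasDerivWithin_le hderiv
      (fun z hz => by rw [Real.norm_eq_abs]; exact hL z hz)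
      (convex_Icc ε M') hy hx
    simpa [Real.norm_eq_abs] using this
  -- grid points
  have hcast : ∀ n : ℕ, ε + (n:ℝ) * (M' - ε) / m = ε + n * h := by
    intro n; rw [hh, mul_div_assoc]
  have hmh : ε + (m:ℝ) * h = M' := by
    rw [hh]; field_simp; ring
  have hmem : ∀ n : ℕ, n ≤ m → ε + (n:ℝ) * h ∈ Set.Icc ε M' := by
    intro n hn
    constructor
    · nlinarith [mul_nonneg (Nat.cast_nonneg (α := ℝ) n) hh0.le]
    · have : (n:ℝ) * h ≤ (m:ℝ) * h := by
        apply mul_le_mul_of_nonneg_right _ hh0.le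
        exact_mod_cast hn
      linarith [hmh]
  -- choose grid index
  set j : ℕ := min (⌊(t - ε)/h⌋₊) (m - 1) with hj
  obtain ⟨htl, htr⟩ := ht
  have hjm : j + 1 ≤ m := by
    have : j ≤ m - 1 := min_le_right _ _
    omega
  have harg : ((j + 1 : ℕ) : ℝ) = (j:ℝ) + 1 := by push_cast; ring
  have hk1 : ε + (j:ℝ) * h ≤ t := by
    have h1 : (j:ℝ) ≤ (t - ε)/h := by
      refine le_trans ?_ (Nat.floor_le (div_nonneg (by linarith) hh0.le))
      exact_mod_cast min_le_left _ _
    have := (le_div_iff₀ hh0).mp h1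
    linarith
  have hk2 : t ≤ ε + ((j:ℝ) + 1) * h := by
    rcases le_or_gt (⌊(t - ε)/h⌋₊) (m - 1) with hc | hc
    · have hje : j = ⌊(t - ε)/h⌋₊ := min_eq_left hc
      have h2 : (t - ε)/h < (j:ℝ) + 1 := by
        rw [hje]; exact Nat.lt_floor_add_one _
      have := (div_lt_iff₀ hh0).mp h2
      linarith
    · have hje : j + 1 = m := by
        have : j = m - 1 := min_eq_right hc.le
        omega
      have hjr : ((j:ℝ) + 1) = (m:ℝ) := by rw [← harg, hje]
      rw [hjr]
      linarith [hmh]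
  have hcj : ε + (j:ℝ) * h ∈ Set.Icc ε M' := hmem j (by omega)
  have hcj1 : ε + ((j:ℝ) + 1) * h ∈ Set.Icc ε M' := by
    have := hmem (j+1) hjm
    rwa [harg] at this
  -- the supremum
  set f : Fin (m+1) → ℝ := fun k =>
    (lam (ε + (k : ℕ) * (M' - ε) / m) - g (ε + (k : ℕ) * (M' - ε) / m)) ^ 2 with hf
  have hBdd : BddAbove (Set.range f) := Set.Finite.bddAbove (Set.finite_range f)
  have hS : ∀ k : Fin (m+1), f k ≤ ⨆ k, f k := fun k => le_ciSup hBdd k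
  have hS0 : 0 ≤ ⨆ k, f k := le_trans (sq_nonneg _) (hS 0)
  set a1 : ℝ := lam (ε + (j:ℝ) * h) - g (ε + (j:ℝ) * h) with ha1
  set a2 : ℝ := lam (ε + ((j:ℝ) + 1) * h) - g (ε + ((j:ℝ) + 1) * h) with ha2
  have haj : a1 ^ 2 ≤ ⨆ k, f k := by
    have := hS ⟨j, by omega⟩
    simpa only [hf, hcast, ha1] using this
  have haj1 : a2 ^ 2 ≤ ⨆ k, f k := by
    have := hS ⟨j+1, by omega⟩
    simpa only [hf, hcast, harg, ha2] using this
  -- distance bounds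
  have hd1 : |lam t - lam (ε + (j:ℝ) * h)| ≤ L * h := by
    refine le_trans (hlip t ⟨htl, htr⟩ _ hcj) ?_
    have hab : |t - (ε + (j:ℝ) * h)| ≤ h := by
      rw [abs_of_nonneg (by linarith)]
      nlinarith [hk2]
    nlinarith
  have hd2 : |lam (ε + ((j:ℝ) + 1) * h) - lam t| ≤ L * h := by
    refine le_trans (hlip _ hcj1 t ⟨htl, htr⟩) ?_
    have hab : |(ε + ((j:ℝ) + 1) * h) - t| ≤ h := by
      rw [abs_of_nonneg (by linarith)]
      nlinarith [hk1]
    nlinarith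
  set D : ℝ := max (|a1|) (|a2|) with hD
  have hD0 : 0 ≤ D := le_trans (abs_nonneg _) (le_max_left _ _)
  have hmain : |lam t - g t| ≤ L * h + D := by
    rw [abs_le]
    constructor
    · have hg1 : g t ≤ g (ε + ((j:ℝ) + 1) * h) := hg ⟨htl, htr⟩ hcj1 hk2
      have h1 : -a2 ≤ D := le_trans (neg_le_abs a2) (le_max_right _ _)
      have h2 : lam (ε + ((j:ℝ) + 1) * h) - lam t ≤ L * h :=
        le_trans (le_abs_self _) hd2
      have ha2' : a2 = lam (ε + ((j:ℝ) + 1) * h) - g (ε + ((j:ℝ) + 1) * h) := ha2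
      linarith
    · have hg0 : g (ε + (j:ℝ) * h) ≤ g t := hg hcj ⟨htl, htr⟩ hk1
      have h1 : a1 ≤ D := le_trans (le_abs_self _) (le_max_left _ _)
      have h2 : lam t - lam (ε + (j:ℝ) * h) ≤ L * h :=
        le_trans (le_abs_self _) hd1
      linarith
  have hD2 : D ^ 2 ≤ ⨆ k, f k := by
    rcases max_cases (|a1|) (|a2|) with ⟨he, _⟩ | ⟨he, _⟩
    · rw [hD, he, sq_abs]; exact haj
    · rw [hD, he, sq_abs]; exact haj1
  have hsq : (lam t - g t) ^ 2 ≤ (L * h + D) ^ 2 := by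
    rw [← sq_abs]
    exact pow_le_pow_left₀ (abs_nonneg _) hmain 2
  have hLh : (L * h) ^ 2 = L ^ 2 * (M' - ε) ^ 2 / (m:ℝ) ^ 2 := by
    rw [hh]; field_simp
  have hkey : 6 * L ^ 2 * (M' - ε) ^ 2 / (m:ℝ) ^ 2 = 6 * (L * h) ^ 2 := by
    rw [hLh]; ring
  rw [hkey]
  nlinarith [hS0, hD2, hsq, sq_nonneg (L * h - D)]
end

section
/- Let Λ : [0,T] → ℝ be continuous, let Λ̃ be the greatest convex minorant of Λ on [0,T], let λ̃(x) denote the left derivative of Λ̃ at x ∈ (0,T], and for a ∈ ℝ let U(a) be the largest element of argmin_{x ∈ [0,T]} (Λ(x) − a x). Then for all x ∈ (0,T] and a ∈ ℝ: λ̃(x) ≤ a if and only if U(a) ≥ x. -/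
open Set Filter Topology

/-- Affine functions are convex on any convex set. -/
lemma affine_convexOn (s : Set ℝ) (hs : Convex ℝ s) (b c : ℝ) :
    ConvexOn ℝ s (fun z => b + c * z) := by
  refine ⟨hs, ?_⟩
  intro x _ y _ p q hp hq hpq
  simp only [smul_eq_mul]
  have : b + c * (p * x + q * y) = p * (b + c * x) + q * (b + c * y) := by
    linear_combination (-b) * hpq
  linarith

theorem switching_relation (T : ℝ) (hT : 0 < T) (Λ : ℝ → ℝ)
    (hΛ : ContinuousOn Λ (Set.Icc 0 T))
    (G : ℝ → ℝ)
    (hG : ∀ x, G x = sSup {y : ℝ | ∃ g : ℝ → ℝ,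
      ConvexOn ℝ (Set.Icc 0 T) g ∧ (∀ z ∈ Set.Icc (0 : ℝ) T, g z ≤ Λ z) ∧ y = g x})
    (lt : ℝ → ℝ)
    (hlt : ∀ x ∈ Set.Ioc (0 : ℝ) T, HasDerivWithinAt G (lt x) (Set.Iio x) x)
    (U : ℝ → ℝ)
    (hU : ∀ a : ℝ, IsGreatest
      {x : ℝ | x ∈ Set.Icc (0 : ℝ) T ∧
        ∀ z ∈ Set.Icc (0 : ℝ) T, Λ x - a * x ≤ Λ z - a * z} (U a)) :
    ∀ x ∈ Set.Ioc (0 : ℝ) T, ∀ a : ℝ, (lt x ≤ a ↔ x ≤ U a) := by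
  -- a global minimizer of Λ on [0,T], to produce a constant convex minorant
  obtain ⟨p, hp, hpmin⟩ :=
    isCompact_Icc.exists_isMinOn (Set.nonempty_Icc.2 hT.le) hΛ
  have hpmin' := isMinOn_iff.mp hpmin
  -- any convex minorant is below G on [0,T]
  have key : ∀ g : ℝ → ℝ, ConvexOn ℝ (Set.Icc 0 T) g →
      (∀ z ∈ Set.Icc (0 : ℝ) T, g z ≤ Λ z) → ∀ x ∈ Set.Icc (0 : ℝ) T, g x ≤ G x := by
    intro g hg hgle x hx
    rw [hG x]
    refine le_csSup ⟨Λ x, ?_⟩ ⟨g, hg, hgle, rfl⟩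
    rintro y ⟨g', hg', hle', rfl⟩
    exact hle' x hx
  -- G ≤ Λ on [0,T]
  have hGle : ∀ x ∈ Set.Icc (0 : ℝ) T, G x ≤ Λ x := by
    intro x hx
    rw [hG x]
    refine csSup_le ⟨Λ p, ⟨fun _ => Λ p, convexOn_const _ (convex_Icc _ _),
      fun z hz => hpmin' z hz, rfl⟩⟩ ?_
    rintro y ⟨g, hg, hle, rfl⟩
    exact hle x hx
  -- G is convex on [0,T]
  have hGconv : ConvexOn ℝ (Set.Icc (0 : ℝ) T) G := by
    refine ⟨convex_Icc _ _, ?_⟩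
    intro x hx y hy s t hs ht hst
    rw [hG (s • x + t • y)]
    refine csSup_le ⟨(fun _ => Λ p) (s • x + t • y), ⟨fun _ => Λ p,
      convexOn_const _ (convex_Icc _ _), fun z hz => hpmin' z hz, rfl⟩⟩ ?_
    rintro w ⟨g, hg, hle, rfl⟩
    calc g (s • x + t • y) ≤ s • g x + t • g y := hg.2 hx hy hs ht hst
      _ ≤ s • G x + t • G y := by
          have h1 := key g hg hle x hx
          have h2 := key g hg hle y hy
          simp only [smul_eq_mul] at *
          nlinarith
  -- main argument
  intro x hx a
  have hx0 : (0 : ℝ) < x := hx.1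
  have hxIcc : x ∈ Set.Icc (0 : ℝ) T := ⟨hx0.le, hx.2⟩
  set u := U a with hu_def
  have hu := hU a
  have huIcc : u ∈ Set.Icc (0 : ℝ) T := hu.1.1
  have humin : ∀ z ∈ Set.Icc (0 : ℝ) T, Λ u - a * u ≤ Λ z - a * z := hu.1.2
  set m := Λ u - a * u with hm_def
  set L : ℝ → ℝ := fun z => m + a * z with hL_def
  have hLconv : ConvexOn ℝ (Set.Icc (0 : ℝ) T) L := affine_convexOn _ (convex_Icc _ _) m a
  have hLleΛ : ∀ z ∈ Set.Icc (0 : ℝ) T, L z ≤ Λ z := by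
    intro z hz
    have := humin z hz
    simp only [hL_def]
    linarith
  have hLleG : ∀ z ∈ Set.Icc (0 : ℝ) T, L z ≤ G z := key L hLconv hLleΛ
  have hGu : G u = L u := by
    have h1 : L u = Λ u := by simp only [hL_def, hm_def]; ring
    exact le_antisymm (h1 ▸ hGle u huIcc) (hLleG u huIcc)
  -- tendsto of the slope at x from the left
  have htend : Tendsto (slope G x) (𝓝[Set.Iio x] x) (𝓝 (lt x)) := by
    have := hasDerivWithinAt_iff_tendsto_slope.mp (hlt x hx)
    rwa [Set.diff_singleton_eq_self (by simp)] at this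
  -- slope rewriting for z < x
  have hslope_eq : ∀ z : ℝ, z ≠ x → slope G x z = (G x - G z) / (x - z) := by
    intro z hzx
    rw [slope_def_field]
    rw [← neg_sub (G x) (G z), ← neg_sub x z, neg_div_neg_eq]
  constructor
  · -- lt x ≤ a → x ≤ u
    intro hlta
    by_contra hcon
    push_neg at hcon  -- u < x
    -- slopes from the left are ≤ lt x
    have hslope_le : ∀ z ∈ Set.Ico (0 : ℝ) x, (G x - G z) / (x - z) ≤ lt x := by
      intro z hz
      refine ge_of_tendsto htend ?_
      refine eventually_of_mem (Ioo_mem_nhdsLT_of_mem ⟨hz.2, le_refl x⟩) ?_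
      intro w hw
      rw [hslope_eq w (ne_of_lt hw.2)]
      have hzI : z ∈ Set.Icc (0 : ℝ) T := ⟨hz.1, hz.2.le.trans hx.2⟩
      have hwI : w ∈ Set.Icc (0 : ℝ) T := ⟨hz.1.trans hw.1.le, hw.2.le.trans hx.2⟩
      have := hGconv.secant_mono hxIcc hzI hwI (ne_of_lt hz.2) (ne_of_lt hw.2) hw.1.le
      have e1 : (G z - G x) / (z - x) = (G x - G z) / (x - z) := by
        rw [← neg_sub (G x) (G z), ← neg_sub x z, neg_div_neg_eq]
      have e2 : (G w - G x) / (w - x) = (G x - G w) / (x - w) := by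
        rw [← neg_sub (G x) (G w), ← neg_sub x w, neg_div_neg_eq]
      linarith [e1 ▸ e2 ▸ this]
    -- hence G x - a x ≤ G u - a u, so G x = L x
    have huIco : u ∈ Set.Ico (0 : ℝ) x := ⟨huIcc.1, hcon⟩
    have h1 : (G x - G u) / (x - u) ≤ a := (hslope_le u huIco).trans hlta
    have hxu : (0 : ℝ) < x - u := by linarith
    have h2 : G x - G u ≤ a * (x - u) := by
      have := (div_le_iff₀ hxu).mp h1
      linarith
    have hGxL : G x = L x := by
      have h3 : L x ≤ G x := hLleG x hxIcc
      simp only [hL_def] at h3 ⊢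
      have h4 : G u = m + a * u := hGu
      linarith
    -- build a better convex minorant, contradiction
    set c : ℝ := (u + x) / 2 with hc_def
    have hcu : u < c := by simp only [hc_def]; linarith
    have hcx : c < x := by simp only [hc_def]; linarith
    have hc0 : (0 : ℝ) ≤ c := le_of_lt (lt_of_le_of_lt huIcc.1 hcu)
    have hcT : c ≤ T := hcx.le.trans hx.2
    obtain ⟨w, hw, hwmin⟩ := isCompact_Icc.exists_isMinOn (Set.nonempty_Icc.2 hcT)
      ((hΛ.mono (Set.Icc_subset_Icc hc0 le_rfl)).sub
        ((continuous_const.mul continuous_id).continuousOn))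
    have hwmin' := isMinOn_iff.mp hwmin
    have hwIcc : w ∈ Set.Icc (0 : ℝ) T := ⟨hc0.trans hw.1, hw.2⟩
    set δ : ℝ := Λ w - a * w - m with hδ_def
    have hδpos : 0 < δ := by
      have h5 : m ≤ Λ w - a * w := humin w hwIcc
      rcases eq_or_lt_of_le h5 with heq | hlt'
      · exfalso
        have hwmem : w ∈ {x : ℝ | x ∈ Set.Icc (0 : ℝ) T ∧
            ∀ z ∈ Set.Icc (0 : ℝ) T, Λ x - a * x ≤ Λ z - a * z} := by
          refine ⟨hwIcc, fun z hz => ?_⟩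
          rw [← heq]
          exact humin z hz
        have : w ≤ u := hu.2 hwmem
        have : c ≤ u := hw.1.trans this
        linarith
      · simp only [hδ_def]; linarith
    set ε : ℝ := δ / (T + 1) with hε_def
    have hεpos : 0 < ε := div_pos hδpos (by linarith)
    set L' : ℝ → ℝ := fun z => (m - ε * c) + (a + ε) * z with hL'_def
    have hgconv : ConvexOn ℝ (Set.Icc (0 : ℝ) T) (L ⊔ L') :=
      (affine_convexOn _ (convex_Icc _ _) m a).sup
        (affine_convexOn _ (convex_Icc _ _) (m - ε * c) (a + ε))
    have hgle : ∀ z ∈ Set.Icc (0 : ℝ) T, (L ⊔ L') z ≤ Λ z := by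
      intro z hz
      have hLz := hLleΛ z hz
      refine sup_le hLz ?_
      rcases le_total z c with hzc | hzc
      · -- L' z ≤ L z
        have : L' z ≤ L z := by
          simp only [hL'_def, hL_def]
          nlinarith
        linarith
      · -- z ∈ [c, T] : use δ
        have hzcT : z ∈ Set.Icc c T := ⟨hzc, hz.2⟩
        have h6 : Λ w - a * w ≤ Λ z - a * z := by
          have := hwmin' z hzcT
          simpa using this
        have h7 : ε * (z - c) ≤ δ := by
          have h8 : z - c ≤ T := by linarith [hz.2, hc0]
          have h9 : ε * (z - c) ≤ ε * T := by nlinarith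
          have h10 : ε * T ≤ δ := by
            rw [hε_def]
            rw [div_mul_eq_mul_div, div_le_iff₀ (by linarith : (0:ℝ) < T + 1)]
            nlinarith
          linarith
        simp only [hL'_def, hδ_def] at h7 ⊢
        nlinarith
    have hcontra : (L ⊔ L') x ≤ G x := key (L ⊔ L') hgconv hgle x hxIcc
    have hL'x : L' x = L x + ε * (x - c) := by
      simp only [hL'_def, hL_def]; ring
    have : L' x ≤ G x := le_trans (le_sup_right.trans_eq (by rfl)) hcontra
    rw [hGxL] at this
    nlinarith
  · -- x ≤ u → lt x ≤ a
    intro hxu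
    refine le_of_tendsto htend ?_
    refine eventually_of_mem (Ioo_mem_nhdsLT_of_mem ⟨hx0, le_refl x⟩) ?_
    intro z hz
    rw [hslope_eq z (ne_of_lt hz.2)]
    have hzI : z ∈ Set.Icc (0 : ℝ) T := ⟨hz.1.le, hz.2.le.trans hx.2⟩
    have hzu : z < u := lt_of_lt_of_le hz.2 hxu
    -- (G x - G z)/(x - z) ≤ (G u - G z)/(u - z) ≤ a
    have hstep : (G x - G z) / (x - z) ≤ (G u - G z) / (u - z) := by
      rcases eq_or_lt_of_le hxu with rfl | hxu'
      · exact le_refl _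
      · have := hGconv.secant_mono hzI hxIcc huIcc
          (ne_of_gt hz.2) (ne_of_gt hzu) hxu
        exact this
    have hzu' : (0 : ℝ) < u - z := by linarith
    have hfinal : (G u - G z) / (u - z) ≤ a := by
      rw [div_le_iff₀ hzu']
      have hGz : L z ≤ G z := hLleG z hzI
      have : G u = m + a * u := hGu
      simp only [hL_def] at hGz
      nlinarith
    linarith
end
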